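/- Let G = (V, E) be a finite simple graph with a partition V = P ⊔ N such that N is an independent set. Then G is a proper tagged probe interval graph with probes P and nonprobes N if and only if there exists a canonical representation of the induced subgraph G_P, with probe enumeration u_1, …, u_p and canonical sequence S : {1, …, 2p} → {1, …, p}, such that for every w ∈ N having at least one neighbor in P there exist positions s ≤ t with the property that every index S(k) with s ≤ k ≤ t is the index of a probe neighbor of w, and every probe neighbor u_i of w satisfies i = S(k) for some s ≤ k ≤ t (i.e., every nonprobe has a perfect substring in the canonical sequence). -/

import Mathlib

open Set

private lemma icc_inter_nonempty {a b c d : ℝ} (hab : a ≤ b) (hcd : c ≤ d) :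
    (Icc a b ∩ Icc c d).Nonempty ↔ a ≤ d ∧ c ≤ b := by
  rw [Icc_inter_Icc, nonempty_Icc, max_le_iff, le_min_iff, le_min_iff]
  exact ⟨fun h => ⟨h.1.2, h.2.1⟩, fun h => ⟨⟨hab, h.1⟩, h.2, hcd⟩⟩

/-- `S : Fin (2*p) → Fin p` is the canonical sequence of the canonical interval
representation with left endpoints `ℓ` and right endpoints `r`. -/
def IsCanonSeq {p : ℕ} (ℓ r : Fin p → ℝ) (S : Fin (2 * p) → Fin p) : Prop :=
  ∃ val : Fin (2 * p) → ℝ, StrictMono val ∧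
    Set.range val = Set.range ℓ ∪ Set.range r ∧
    ∀ k, ℓ (S k) = val k ∨ r (S k) = val k

/-- main characterization: `G` with independent set `N` and probes
`P = Nᶜ` is a proper tagged probe interval graph iff there is a canonical
representation of the induced subgraph `G_P` (enumeration `u`, intervals `[ℓ i, r i]`,
canonical sequence `S`) such that every nonprobe `w` with at least one probe neighbor
has a perfect substring in `S`: positions `s ≤ t` such that every `S k` with
`s ≤ k ≤ t` indexes a probe neighbor of `w` and every probe neighbor of `w` occurs as
some `S k` with `s ≤ k ≤ t`. -/
theorem stmt6 {V : Type*} [Fintype V] (G : SimpleGraph V) (P N : Set V)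
    (hPN : P = Nᶜ)
    (hind : ∀ w ∈ N, ∀ w' ∈ N, ¬ G.Adj w w') :
    (∃ ℓ r : V → ℝ,
      (∀ x, ℓ x ≤ r x) ∧
      (∀ x ∈ P, ∀ y ∈ P, x ≠ y →
        (G.Adj x y ↔ (Icc (ℓ x) (r x) ∩ Icc (ℓ y) (r y)).Nonempty)) ∧
      (∀ x ∈ P, ∀ y ∈ P, x ≠ y → ¬ Icc (ℓ x) (r x) ⊂ Icc (ℓ y) (r y)) ∧
      (∀ x ∈ P, ∀ w ∈ N,
        (G.Adj x w ↔ ℓ x ∈ Icc (ℓ w) (r w) ∨ r x ∈ Icc (ℓ w) (r w))))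
    ↔
    (∃ (p : ℕ) (u : Fin p → V) (ℓ r : Fin p → ℝ) (S : Fin (2 * p) → Fin p),
      Function.Injective u ∧ Set.range u = P ∧
      (∀ i, ℓ i ≤ r i) ∧ StrictMono ℓ ∧ StrictMono r ∧
      (∀ i j : Fin p, ℓ i ≠ r j) ∧
      (∀ i j : Fin p, i ≠ j →
        (G.Adj (u i) (u j) ↔ (Icc (ℓ i) (r i) ∩ Icc (ℓ j) (r j)).Nonempty)) ∧
      IsCanonSeq ℓ r S ∧
      (∀ w ∈ N, (∃ x ∈ P, G.Adj x w) →
        ∃ s t : Fin (2 * p), s ≤ t ∧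
          (∀ k, s ≤ k → k ≤ t → G.Adj (u (S k)) w) ∧
          (∀ i : Fin p, G.Adj (u i) w → ∃ k, s ≤ k ∧ k ≤ t ∧ S k = i))) := by
  constructor
  · rintro ⟨ℓ, r, hlr, hadjPP, hcont, hadjPN⟩
    classical
    -- properness consequences
    have hA : ∀ x ∈ P, ∀ y ∈ P, x ≠ y → ℓ x ≤ ℓ y → r y ≤ r x → ℓ x = ℓ y ∧ r x = r y := by
      intro x hx y hy hxy h1 h2
      have hsub : Icc (ℓ y) (r y) ⊆ Icc (ℓ x) (r x) := Icc_subset_Icc h1 h2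
      have heq : Icc (ℓ y) (r y) = Icc (ℓ x) (r x) := by
        by_contra hne'
        exact hcont y hy x hx (Ne.symm hxy) (ssubset_iff_subset_ne.mpr ⟨hsub, hne'⟩)
      have e1 : ℓ x ∈ Icc (ℓ y) (r y) := by rw [heq]; exact ⟨le_rfl, hlr x⟩
      have e2 : r x ∈ Icc (ℓ y) (r y) := by rw [heq]; exact ⟨hlr x, le_rfl⟩
      exact ⟨le_antisymm h1 e1.1, le_antisymm e2.2 h2⟩
    have hB : ∀ x ∈ P, ∀ y ∈ P, ℓ x < ℓ y → r x < r y := by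
      intro x hx y hy h
      by_contra h'
      push_neg at h'
      have hxy : x ≠ y := by rintro rfl; exact lt_irrefl _ h
      exact absurd (hA x hx y hy hxy h.le h').1 h.ne
    have hC : ∀ x ∈ P, ∀ y ∈ P, ℓ x = ℓ y → r x = r y := by
      intro x hx y hy h
      by_cases hxy : x = y
      · rw [hxy]
      · rcases le_total (r y) (r x) with h' | h'
        · exact (hA x hx y hy hxy h.le h').2
        · exact ((hA y hy x hx (Ne.symm hxy) h.ge h').2).symm
    -- enumeration of P
    let c : V → ℕ := fun x => ((Fintype.equivFin V) x : ℕ)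
    have hcinj : Function.Injective c := fun a b h =>
      (Fintype.equivFin V).injective (Fin.val_injective h)
    let f : ↥P → ℝ ×ₗ ℕ := fun x => toLex (ℓ ↑x, c ↑x)
    have hfinj : Function.Injective f := by
      intro a b h
      have h2 : (ofLex (f a)).2 = (ofLex (f b)).2 := by rw [h]
      exact Subtype.ext (hcinj h2)
    letI : Fintype ↥P := Fintype.ofFinite ↥P
    letI linP : LinearOrder ↥P := LinearOrder.lift' f hfinj
    let e := monoEquivOfFin ↥P rfl
    set p := Fintype.card ↥P with hp
    let u : Fin p → V := fun i => ((e i : ↥P) : V)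
    have hu_inj : Function.Injective u := fun i j h => e.injective (Subtype.ext h)
    have hu_mem : ∀ i, u i ∈ P := fun i => (e i).2
    have hu_range : Set.range u = P := by
      apply Set.eq_of_subset_of_subset
      · rintro _ ⟨i, rfl⟩; exact hu_mem i
      · intro x hx
        refine ⟨e.symm ⟨x, hx⟩, ?_⟩
        show ((e (e.symm ⟨x, hx⟩) : ↥P) : V) = x
        rw [OrderIso.apply_symm_apply]
    have hkey0 : ∀ i j : Fin p, i ≤ j →
        ℓ (u i) < ℓ (u j) ∨ (ℓ (u i) = ℓ (u j) ∧ c (u i) ≤ c (u j)) := by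
      intro i j hij
      have h : toLex (ℓ (u i), c (u i)) ≤ toLex (ℓ (u j), c (u j)) := e.monotone hij
      exact Prod.Lex.le_iff.mp h
    have hlu_mono : Monotone fun i => ℓ (u i) := fun i j hij => by
      rcases hkey0 i j hij with h | h
      · exact h.le
      · exact h.1.le
    have hru_mono : Monotone fun i => r (u i) := fun i j hij => by
      rcases eq_or_lt_of_le (hlu_mono hij) with h | h
      · exact (hC _ (hu_mem i) _ (hu_mem j) h).le
      · exact (hB _ (hu_mem i) _ (hu_mem j) h).le
    -- events
    let ev : Fin (2 * p) → Bool × Fin p := fun k =>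
      if h : (k : ℕ) < p then (false, ⟨k, h⟩)
      else (true, ⟨(k : ℕ) - p, by have := k.isLt; omega⟩)
    let enc : Bool × Fin p → Fin (2 * p) := fun s =>
      cond s.1 ⟨p + (s.2 : ℕ), by have := s.2.isLt; omega⟩
        ⟨(s.2 : ℕ), by have := s.2.isLt; omega⟩
    have h_ev_enc : ∀ s, ev (enc s) = s := by
      rintro ⟨b, i⟩
      cases b
      · show ev ⟨(i : ℕ), _⟩ = _
        show dite _ _ _ = _
        rw [dif_pos i.isLt]
      · show ev ⟨p + (i : ℕ), _⟩ = _
        show dite _ _ _ = _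
        rw [dif_neg (show ¬ p + (i : ℕ) < p by omega)]
        refine Prod.ext rfl (Fin.ext ?_)
        show p + (i : ℕ) - p = (i : ℕ)
        omega
    have h_enc_ev : ∀ k, enc (ev k) = k := by
      intro k
      by_cases h : (k : ℕ) < p
      · have : ev k = (false, ⟨(k : ℕ), h⟩) := dif_pos h
        rw [this]
        exact Fin.ext rfl
      · have : ev k = (true, ⟨(k : ℕ) - p, by have := k.isLt; omega⟩) := dif_neg h
        rw [this]
        refine Fin.ext ?_
        show p + ((k : ℕ) - p) = (k : ℕ)
        omega
    let vfun : Bool × Fin p → ℝ := fun s => cond s.1 (r (u s.2)) (ℓ (u s.2))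
    let key : Fin (2 * p) → ℝ ×ₗ (Bool ×ₗ Fin p) := fun k => toLex (vfun (ev k), toLex (ev k))
    have hkey_inj : Function.Injective key := by
      intro a b h
      have h2 : toLex (ev a) = toLex (ev b) := congrArg (fun z => (ofLex z).2) h
      have h3 : ev a = ev b := toLex.injective h2
      rw [← h_enc_ev a, ← h_enc_ev b, h3]
    let σ := Tuple.sort key
    have hmono : Monotone (key ∘ σ) := Tuple.monotone_sort key
    have hsm : StrictMono (key ∘ σ) :=
      hmono.strictMono_of_injective (hkey_inj.comp σ.injective)
    have hrank : ∀ a b : Fin (2 * p), σ.symm a < σ.symm b ↔ key a < key b := by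
      intro a b
      rw [← hsm.lt_iff_lt]
      simp only [Function.comp_apply, Equiv.apply_symm_apply]
    have hlex : ∀ (a b : ℝ) (s t : Bool × Fin p),
        (toLex (a, toLex s) < toLex (b, toLex t)) ↔
          (a < b ∨ (a = b ∧ (s.1 = false ∧ t.1 = true ∨ (s.1 = t.1 ∧ s.2 < t.2)))) := by
      intro a b s t
      rw [Prod.Lex.lt_iff, Prod.Lex.lt_iff]
      simp [Bool.lt_iff]
    have hcomp : ∀ s t : Bool × Fin p, σ.symm (enc s) < σ.symm (enc t) ↔
        (vfun s < vfun t ∨ (vfun s = vfun t ∧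
          (s.1 = false ∧ t.1 = true ∨ (s.1 = t.1 ∧ s.2 < t.2)))) := by
      intro s t
      rw [hrank]
      have e1 : key (enc s) = toLex (vfun s, toLex s) := by
        show toLex (vfun (ev (enc s)), toLex (ev (enc s))) = _
        rw [h_ev_enc]
      have e2 : key (enc t) = toLex (vfun t, toLex t) := by
        show toLex (vfun (ev (enc t)), toLex (ev (enc t))) = _
        rw [h_ev_enc]
      rw [e1, e2, hlex]
    let A : Fin p → Fin (2 * p) := fun i => σ.symm (enc (false, i))
    let B : Fin p → Fin (2 * p) := fun i => σ.symm (enc (true, i))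
    have hAA : ∀ i j : Fin p, i < j → A i < A j := by
      intro i j hij
      rw [show A i < A j ↔ _ from hcomp (false, i) (false, j)]
      rcases lt_or_eq_of_le (hlu_mono hij.le) with h | h
      · exact Or.inl h
      · exact Or.inr ⟨h, Or.inr ⟨rfl, hij⟩⟩
    have hBB : ∀ i j : Fin p, i < j → B i < B j := by
      intro i j hij
      rw [show B i < B j ↔ _ from hcomp (true, i) (true, j)]
      rcases lt_or_eq_of_le (hru_mono hij.le) with h | h
      · exact Or.inl h
      · exact Or.inr ⟨h, Or.inr ⟨rfl, hij⟩⟩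
    have hAB : ∀ i j : Fin p, A i < B j ↔ ℓ (u i) ≤ r (u j) := by
      intro i j
      rw [show A i < B j ↔ _ from hcomp (false, i) (true, j)]
      constructor
      · rintro (h | ⟨h, _⟩)
        · exact le_of_lt h
        · exact le_of_eq h
      · intro h
        rcases lt_or_eq_of_le h with h' | h'
        · exact Or.inl h'
        · exact Or.inr ⟨h', Or.inl ⟨rfl, rfl⟩⟩
    have hBA : ∀ i j : Fin p, B j < A i ↔ r (u j) < ℓ (u i) := by
      intro i j
      rw [show B j < A i ↔ _ from hcomp (true, j) (false, i)]
      constructor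
      · rintro (h | ⟨h, (⟨h1, h2⟩ | ⟨h1, h2⟩)⟩)
        · exact h
        · simp at h1
        · simp at h1
      · exact Or.inl
    have hABne : ∀ i j : Fin p, A i ≠ B j := by
      intro i j h
      have h2 := congrArg ev (σ.symm.injective h)
      rw [h_ev_enc, h_ev_enc] at h2
      have := congrArg Prod.fst h2
      simp at this
    -- the new representation
    let ℓ' : Fin p → ℝ := fun i => ((A i : ℕ) : ℝ)
    let r' : Fin p → ℝ := fun i => ((B i : ℕ) : ℝ)
    let S' : Fin (2 * p) → Fin p := fun k => (ev (σ k)).2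
    let val' : Fin (2 * p) → ℝ := fun k => ((k : ℕ) : ℝ)
    have hcastlt : ∀ a b : Fin (2 * p), a < b → ((a : ℕ) : ℝ) < ((b : ℕ) : ℝ) := by
      intro a b h
      exact_mod_cast h
    have hlr' : ∀ i, ℓ' i ≤ r' i := fun i =>
      (hcastlt _ _ ((hAB i i).mpr (hlr (u i)))).le
    have hle' : ∀ i j : Fin p, ℓ' i ≤ r' j ↔ ℓ (u i) ≤ r (u j) := by
      intro i j
      constructor
      · intro h
        by_contra h'
        push_neg at h'
        have h2 := hcastlt _ _ ((hBA i j).mpr h')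
        have h3 : ((A i : ℕ) : ℝ) ≤ ((B j : ℕ) : ℝ) := h
        linarith
      · intro h
        exact (hcastlt _ _ ((hAB i j).mpr h)).le
    have hvalS : ∀ k : Fin (2 * p), ℓ' (S' k) = val' k ∨ r' (S' k) = val' k := by
      intro k
      have heta : ev (σ k) = ((ev (σ k)).1, (ev (σ k)).2) := rfl
      cases hb : (ev (σ k)).1
      · left
        have h1 : enc (false, (ev (σ k)).2) = σ k := by
          have h0 : ((false, (ev (σ k)).2) : Bool × Fin p) = ev (σ k) := Prod.ext hb.symm rfl
          rw [h0, h_enc_ev]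
        show ((σ.symm (enc (false, (ev (σ k)).2)) : ℕ) : ℝ) = ((k : ℕ) : ℝ)
        rw [h1, Equiv.symm_apply_apply]
      · right
        have h1 : enc (true, (ev (σ k)).2) = σ k := by
          have h0 : ((true, (ev (σ k)).2) : Bool × Fin p) = ev (σ k) := Prod.ext hb.symm rfl
          rw [h0, h_enc_ev]
        show ((σ.symm (enc (true, (ev (σ k)).2)) : ℕ) : ℝ) = ((k : ℕ) : ℝ)
        rw [h1, Equiv.symm_apply_apply]
    refine ⟨p, u, ℓ', r', S', hu_inj, hu_range, hlr', ?_, ?_, ?_, ?_, ⟨val', ?_, ?_, hvalS⟩, ?_⟩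
    · intro i j h
      exact hcastlt _ _ (hAA i j h)
    · intro i j h
      exact hcastlt _ _ (hBB i j h)
    · intro i j h
      exact hABne i j (Fin.ext (Nat.cast_injective h))
    · intro i j hij
      rw [hadjPP (u i) (hu_mem i) (u j) (hu_mem j) (fun h => hij (hu_inj h)),
        icc_inter_nonempty (hlr (u i)) (hlr (u j)), icc_inter_nonempty (hlr' i) (hlr' j)]
      exact and_congr (hle' i j).symm (hle' j i).symm
    · intro a b h
      exact hcastlt _ _ h
    · apply Set.Subset.antisymm
      · rintro _ ⟨k, rfl⟩
        rcases hvalS k with h | h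
        · exact Or.inl ⟨S' k, h⟩
        · exact Or.inr ⟨S' k, h⟩
      · rintro x (⟨i, rfl⟩ | ⟨i, rfl⟩)
        · exact ⟨A i, rfl⟩
        · exact ⟨B i, rfl⟩
    · rintro w hw ⟨x, hx, hadjxw⟩
      obtain ⟨i0, hi0⟩ : ∃ i, u i = x := by rwa [← hu_range, Set.mem_range] at hx
      let vv : Fin (2 * p) → ℝ := fun k => vfun (ev (σ k))
      have hvv_mono : Monotone vv := fun a b h => Prod.Lex.monotone_fst _ _ (hmono h)
      have hvvA : ∀ i, vv (A i) = ℓ (u i) := by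
        intro i
        show vfun (ev (σ (σ.symm (enc (false, i))))) = _
        rw [Equiv.apply_symm_apply, h_ev_enc]
        exact rfl
      have hvvB : ∀ i, vv (B i) = r (u i) := by
        intro i
        show vfun (ev (σ (σ.symm (enc (true, i))))) = _
        rw [Equiv.apply_symm_apply, h_ev_enc]
        exact rfl
      have hvv_cases : ∀ k, vv k = ℓ (u (S' k)) ∨ vv k = r (u (S' k)) := by
        intro k
        have hk : vv k = cond (ev (σ k)).1 (r (u (S' k))) (ℓ (u (S' k))) := rfl
        cases hb : (ev (σ k)).1
        · left; rw [hk, hb, Bool.cond_false]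
        · right; rw [hk, hb, Bool.cond_true]
      let K : Finset (Fin (2 * p)) := Finset.univ.filter (fun k => vv k ∈ Icc (ℓ w) (r w))
      have hKne : K.Nonempty := by
        rcases (hadjPN x hx w hw).mp hadjxw with h | h
        · exact ⟨A i0, Finset.mem_filter.mpr ⟨Finset.mem_univ _, by rw [hvvA, hi0]; exact h⟩⟩
        · exact ⟨B i0, Finset.mem_filter.mpr ⟨Finset.mem_univ _, by rw [hvvB, hi0]; exact h⟩⟩
      refine ⟨K.min' hKne, K.max' hKne, K.min'_le _ (K.max'_mem hKne), ?_, ?_⟩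
      · intro k hk1 hk2
        have hs := (Finset.mem_filter.mp (K.min'_mem hKne)).2
        have ht := (Finset.mem_filter.mp (K.max'_mem hKne)).2
        have h1 : ℓ w ≤ vv k := le_trans hs.1 (hvv_mono hk1)
        have h2 : vv k ≤ r w := le_trans (hvv_mono hk2) ht.2
        rcases hvv_cases k with h | h
        · exact (hadjPN (u (S' k)) (hu_mem _) w hw).mpr (Or.inl (by rw [← h]; exact ⟨h1, h2⟩))
        · exact (hadjPN (u (S' k)) (hu_mem _) w hw).mpr (Or.inr (by rw [← h]; exact ⟨h1, h2⟩))
      · intro i hadji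
        rcases (hadjPN (u i) (hu_mem i) w hw).mp hadji with h | h
        · have hmemK : A i ∈ K :=
            Finset.mem_filter.mpr ⟨Finset.mem_univ _, by rw [hvvA]; exact h⟩
          refine ⟨A i, K.min'_le _ hmemK, K.le_max' _ hmemK, ?_⟩
          show (ev (σ (σ.symm (enc (false, i))))).2 = i
          rw [Equiv.apply_symm_apply, h_ev_enc]
        · have hmemK : B i ∈ K :=
            Finset.mem_filter.mpr ⟨Finset.mem_univ _, by rw [hvvB]; exact h⟩
          refine ⟨B i, K.min'_le _ hmemK, K.le_max' _ hmemK, ?_⟩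
          show (ev (σ (σ.symm (enc (true, i))))).2 = i
          rw [Equiv.apply_symm_apply, h_ev_enc]
  · rintro ⟨p, u, ℓ, r, S, hu_inj, hu_range, hlr, hlm, hrm, hne, hadj,
      ⟨val, hvm, hvr, hvS⟩, hperf⟩
    classical
    obtain ⟨M, hM⟩ := (Set.finite_range fun i => max (ℓ i) (r i)).bddAbove
    have hM' : ∀ i, ℓ i ≤ M ∧ r i ≤ M := fun i => by
      have := hM (Set.mem_range_self (f := fun i => max (ℓ i) (r i)) i)
      exact ⟨le_trans (le_max_left _ _) this, le_trans (le_max_right _ _) this⟩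
    have hmem : ∀ x, x ∈ P → ∃ i, u i = x := fun x hx => by
      rwa [← hu_range, Set.mem_range] at hx
    refine ⟨fun x => if hx : x ∈ P then ℓ (hmem x hx).choose
        else if hw : ∃ q : Fin (2 * p) × Fin (2 * p), q.1 ≤ q.2 ∧
            (∀ k, q.1 ≤ k → k ≤ q.2 → G.Adj (u (S k)) x) ∧
            (∀ i : Fin p, G.Adj (u i) x → ∃ k, q.1 ≤ k ∧ k ≤ q.2 ∧ S k = i)
          then val hw.choose.1 else M + 1,
      fun x => if hx : x ∈ P then r (hmem x hx).choose
        else if hw : ∃ q : Fin (2 * p) × Fin (2 * p), q.1 ≤ q.2 ∧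
            (∀ k, q.1 ≤ k → k ≤ q.2 → G.Adj (u (S k)) x) ∧
            (∀ i : Fin p, G.Adj (u i) x → ∃ k, q.1 ≤ k ∧ k ≤ q.2 ∧ S k = i)
          then val hw.choose.2 else M + 2, ?_, ?_, ?_, ?_⟩
    · intro x
      dsimp only
      split_ifs with hx hw
      · exact hlr _
      · exact hvm.monotone hw.choose_spec.1
      · linarith
    · intro x hx y hy hxy
      dsimp only
      simp only [dif_pos hx, dif_pos hy]
      have hij : (hmem x hx).choose ≠ (hmem y hy).choose := by
        intro h
        apply hxy
        rw [← (hmem x hx).choose_spec, ← (hmem y hy).choose_spec, h]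
      have h2 := hadj _ _ hij
      rw [(hmem x hx).choose_spec, (hmem y hy).choose_spec] at h2
      exact h2
    · intro x hx y hy hxy
      dsimp only
      simp only [dif_pos hx, dif_pos hy]
      have hij : (hmem x hx).choose ≠ (hmem y hy).choose := by
        intro h
        apply hxy
        rw [← (hmem x hx).choose_spec, ← (hmem y hy).choose_spec, h]
      intro hss
      rcases hij.lt_or_gt with h | h
      · have h1 : ℓ (hmem x hx).choose ∈ Icc (ℓ (hmem y hy).choose) (r (hmem y hy).choose) :=
          hss.subset ⟨le_rfl, hlr _⟩
        exact absurd h1.1 (not_le.mpr (hlm h))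
      · have h1 : r (hmem x hx).choose ∈ Icc (ℓ (hmem y hy).choose) (r (hmem y hy).choose) :=
          hss.subset ⟨hlr _, le_rfl⟩
        exact absurd h1.2 (not_le.mpr (hrm h))
    · intro x hx w hw
      have hwP : w ∉ P := by rw [hPN]; simpa using hw
      dsimp only
      simp only [dif_pos hx, dif_neg hwP]
      have hux : u (hmem x hx).choose = x := (hmem x hx).choose_spec
      by_cases hq : ∃ q : Fin (2 * p) × Fin (2 * p), q.1 ≤ q.2 ∧
          (∀ k, q.1 ≤ k → k ≤ q.2 → G.Adj (u (S k)) w) ∧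
          (∀ i : Fin p, G.Adj (u i) w → ∃ k, q.1 ≤ k ∧ k ≤ q.2 ∧ S k = i)
      · simp only [dif_pos hq]
        obtain ⟨hst, h1, h2⟩ := hq.choose_spec
        constructor
        · intro ha
          obtain ⟨k, hk1, hk2, hk3⟩ := h2 _ (by rwa [hux])
          rcases hvS k with h | h <;> rw [hk3] at h
          · exact Or.inl (by rw [Set.mem_Icc, h]; exact ⟨hvm.monotone hk1, hvm.monotone hk2⟩)
          · exact Or.inr (by rw [Set.mem_Icc, h]; exact ⟨hvm.monotone hk1, hvm.monotone hk2⟩)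
        · rintro (h | h)
          · have hmem' : ℓ (hmem x hx).choose ∈ Set.range val := by
              rw [hvr]; exact Or.inl ⟨_, rfl⟩
            obtain ⟨k, hk⟩ := hmem'
            have hk1 : hq.choose.1 ≤ k := by
              have := h.1; rw [← hk] at this; exact hvm.le_iff_le.mp this
            have hk2 : k ≤ hq.choose.2 := by
              have := h.2; rw [← hk] at this; exact hvm.le_iff_le.mp this
            have hSk : S k = (hmem x hx).choose := by
              rcases hvS k with h' | h'
              · exact hlm.injective (by rw [h', hk])
              · exact absurd (h'.trans hk).symm (hne _ (S k))
            have := h1 k hk1 hk2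
            rwa [hSk, hux] at this
          · have hmem' : r (hmem x hx).choose ∈ Set.range val := by
              rw [hvr]; exact Or.inr ⟨_, rfl⟩
            obtain ⟨k, hk⟩ := hmem'
            have hk1 : hq.choose.1 ≤ k := by
              have := h.1; rw [← hk] at this; exact hvm.le_iff_le.mp this
            have hk2 : k ≤ hq.choose.2 := by
              have := h.2; rw [← hk] at this; exact hvm.le_iff_le.mp this
            have hSk : S k = (hmem x hx).choose := by
              rcases hvS k with h' | h'
              · exact absurd (h'.trans hk) (hne (S k) _)
              · exact hrm.injective (by rw [h', hk])
            have := h1 k hk1 hk2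
            rwa [hSk, hux] at this
      · simp only [dif_neg hq]
        have hnadj : ¬ G.Adj x w := by
          intro ha
          obtain ⟨s, t, h1, h2, h3⟩ := hperf w hw ⟨x, hx, ha⟩
          exact hq ⟨(s, t), h1, h2, h3⟩
        refine iff_of_false hnadj ?_
        rintro (h | h) <;> rw [Set.mem_Icc] at h
        · linarith [(hM' (hmem x hx).choose).1]
        · linarith [(hM' (hmem x hx).choose).2]
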